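/- Let v, ω₁, ω₂ be weights, 1 < p₁, p₂ < ∞, 1/p = 1/p₁ + 1/p₂. If (v, ω₁, ω₂) satisfies the bilinear martingale A_{p⃗} condition, then the bilinear maximal operator M(f,g) = sup_n |E_n f||E_n g| maps L^{p₁}(ω₁) × L^{p₂}(ω₂) boundedly into weak-L^p(v): ‖M(f,g)‖_{L^{p,∞}(v)} ≤ C ‖f‖_{L^{p₁}(ω₁)} ‖g‖_{L^{p₂}(ω₂)}. -/

import Mathlib

open MeasureTheory Filter ENNReal

noncomputable section

lemma young_opt_zero {q B c : ℝ} (hq : 0 < q)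
    (h : ∀ t : ℝ, 0 < t → c ≤ t ^ (-q) * B / q) : c ≤ 0 := by
  have htend : Tendsto (fun t : ℝ => t ^ (-q) * B / q) atTop (nhds 0) := by
    have h1 : Tendsto (fun t : ℝ => t ^ (-q)) atTop (nhds 0) := tendsto_rpow_neg_atTop hq
    have := h1.mul_const (B / q)
    simpa [mul_div_assoc] using this
  exact ge_of_tendsto htend (eventually_atTop.2 ⟨1, fun t ht => h t (by linarith)⟩)

lemma young_opt {p q A B c : ℝ} (hp : 1 < p) (hq : 1 < q) (hpq : 1/p + 1/q = 1)
    (hA : 0 ≤ A) (hB : 0 ≤ B)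
    (h : ∀ t : ℝ, 0 < t → c ≤ t ^ p * A / p + t ^ (-q) * B / q) :
    c ≤ A ^ (1/p) * B ^ (1/q) := by
  have hp0 : (0:ℝ) < p := by linarith
  have hq0 : (0:ℝ) < q := by linarith
  rcases hA.eq_or_lt with hA0 | hA0
  · have : c ≤ 0 := by
      apply young_opt_zero hq0
      intro t ht
      have := h t ht
      simpa [← hA0] using this
    rw [← hA0, Real.zero_rpow (by positivity : (1:ℝ)/p ≠ 0), zero_mul]
    exact this
  rcases hB.eq_or_lt with hB0 | hB0
  · have : c ≤ 0 := by
      apply young_opt_zero hp0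
      intro t ht
      have h2 := h t⁻¹ (inv_pos.2 ht)
      have e1 : (t⁻¹) ^ p = t ^ (-p) := by
        rw [Real.inv_rpow ht.le, ← Real.rpow_neg ht.le]
      rw [e1, ← hB0] at h2
      simpa using h2
    rw [← hB0, Real.zero_rpow (by positivity : (1:ℝ)/q ≠ 0), mul_zero]
    exact this
  · have hpq' : p + q = p * q := by
      field_simp at hpq; linarith
    set t : ℝ := (B / A) ^ ((p * q)⁻¹) with ht_def
    have hBA : (0:ℝ) < B / A := div_pos hB0 hA0
    have ht : 0 < t := Real.rpow_pos_of_pos hBA _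
    have htp : t ^ p = (B / A) ^ (1/q) := by
      rw [ht_def, ← Real.rpow_mul hBA.le]
      congr 1
      field_simp
      try ring
    have htq : t ^ (-q) = (B / A) ^ (-(1/p)) := by
      rw [ht_def, ← Real.rpow_mul hBA.le]
      congr 1
      field_simp
      try ring
    have hdiv : ∀ z : ℝ, (B / A) ^ z = B ^ z * A ^ (-z) := by
      intro z
      rw [Real.div_rpow hB0.le hA0.le, Real.rpow_neg hA0.le, div_eq_mul_inv]
    have e1 : t ^ p * A = A ^ (1/p) * B ^ (1/q) := by
      rw [htp, hdiv, mul_assoc]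
      have h3 : A ^ (-(1/q)) * A = A ^ (1/p) := by
        nth_rewrite 2 [← Real.rpow_one A]
        rw [← Real.rpow_add hA0]
        congr 1; linarith
      rw [h3, mul_comm]
    have e2 : t ^ (-q) * B = A ^ (1/p) * B ^ (1/q) := by
      rw [htq, hdiv, neg_neg, mul_comm (B ^ (-(1/p))) (A ^ (1/p)), mul_assoc]
      congr 1
      nth_rewrite 2 [← Real.rpow_one B]
      rw [← Real.rpow_add hB0]
      congr 1; linarith
    calc c ≤ t ^ p * A / p + t ^ (-q) * B / q := h t ht
      _ = A ^ (1/p) * B ^ (1/q) * (1/p + 1/q) := by rw [e1, e2]; ring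
      _ = A ^ (1/p) * B ^ (1/q) := by rw [hpq, mul_one]

lemma young_opt_rat {p q A B c : ℝ} (hp : 1 < p) (hq : 1 < q) (hpq : 1/p + 1/q = 1)
    (hA : 0 ≤ A) (hB : 0 ≤ B)
    (h : ∀ t : ℚ, 0 < t → c ≤ (t:ℝ) ^ p * A / p + (t:ℝ) ^ (-q) * B / q) :
    c ≤ A ^ (1/p) * B ^ (1/q) := by
  apply young_opt hp hq hpq hA hB
  intro t ht
  set φ : ℝ → ℝ := fun s => s ^ p * A / p + s ^ (-q) * B / q with hφ
  have hcont : ContinuousAt φ t := by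
    apply ContinuousAt.add
    · exact ((Real.continuousAt_rpow_const t p (Or.inl ht.ne')).mul continuousAt_const).div_const _
    · exact ((Real.continuousAt_rpow_const t (-q) (Or.inl ht.ne')).mul continuousAt_const).div_const _
  refine le_of_forall_pos_le_add fun ε hε => ?_
  have hev : ∀ᶠ s in nhds t, φ s < φ t + ε :=
    hcont.eventually_lt_const (lt_add_of_pos_right _ hε)
  obtain ⟨δ, hδpos, hδ⟩ := Metric.eventually_nhds_iff.mp hev
  have hL : max (t - δ/2) (t/2) < t := max_lt (by linarith) (by linarith)
  obtain ⟨r, hr1, hr2⟩ := exists_rat_btwn hL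
  have hr0 : (0:ℝ) < r := by
    have := (le_max_right (t - δ/2) (t/2)).trans_lt hr1
    linarith
  have hdist : dist (r:ℝ) t < δ := by
    rw [Real.dist_eq, abs_sub_lt_iff]
    constructor
    · linarith
    · have := (le_max_left (t - δ/2) (t/2)).trans_lt hr1
      linarith
  have := hδ hdist
  calc c ≤ φ r := h r (by exact_mod_cast hr0)
    _ ≤ φ t + ε := this.le

lemma condexp_holder {Ω : Type*} {m0 : MeasurableSpace Ω} {μ : Measure Ω}
    {m : MeasurableSpace Ω}
    (f ω : Ω → ℝ) (hω : ∀ x, 0 < ω x) (p : ℝ) (hp : 1 < p)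
    (hf : Integrable f μ) (hF : Integrable (fun y => |f y| ^ p * ω y) μ)
    (hσ : Integrable (fun y => ω y ^ (-(1/(p-1)))) μ) :
    ∀ᵐ x ∂μ, |(μ[f|m]) x| ≤
      ((μ[fun y => |f y| ^ p * ω y|m]) x) ^ (1/p) *
      ((μ[fun y => ω y ^ (-(1/(p-1)))|m]) x) ^ ((p-1)/p) := by
  have hp0 : (0:ℝ) < p := by linarith
  have hp1 : (0:ℝ) < p - 1 := by linarith
  set q : ℝ := p/(p-1) with hq_def
  have hq1 : 1 < q := by rw [hq_def, lt_div_iff₀ hp1]; linarith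
  have hq0 : 0 < q := by linarith
  have hpq : 1/p + 1/q = 1 := by rw [hq_def]; field_simp; ring
  have hexp : (p-1)/p = 1/q := by rw [hq_def]; field_simp
  set F : Ω → ℝ := fun y => |f y| ^ p * ω y with hF_def
  set σ : Ω → ℝ := fun y => ω y ^ (-(1/(p-1))) with hσ_def
  set af : Ω → ℝ := fun y => |f y| with haf_def
  have hconj : p.HolderConjugate q := ⟨by rw [inv_one, ← one_div, ← one_div]; exact hpq, hp0, hq0⟩
  have hYoung : ∀ t : ℝ, 0 < t → ∀ x, |f x| ≤ (t^p/p) * F x + (t^(-q)/q) * σ x := by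
    intro t ht x
    have hωx := hω x
    have key := Real.young_inequality_of_nonneg
      (a := t * (|f x| * ω x ^ (1/p))) (b := t⁻¹ * ω x ^ (-(1/p)))
      (by positivity) (by positivity) hconj
    have hprod : (t * (|f x| * ω x ^ (1/p))) * (t⁻¹ * ω x ^ (-(1/p))) = |f x| := by
      rw [Real.rpow_neg hωx.le]
      have h1 : ω x ^ ((1:ℝ)/p) ≠ 0 := by positivity
      field_simp
      try ring
    have hω1 : (ω x ^ ((1:ℝ)/p)) ^ p = ω x := by
      rw [← Real.rpow_mul hωx.le, one_div_mul_cancel hp0.ne', Real.rpow_one]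
    have hω2 : (ω x ^ (-(1/p) : ℝ)) ^ q = σ x := by
      rw [← Real.rpow_mul hωx.le, hσ_def]
      congr 1
      rw [hq_def]
      field_simp
      try ring
    have ha : (t * (|f x| * ω x ^ (1/p))) ^ p = t ^ p * F x := by
      rw [Real.mul_rpow ht.le (by positivity),
        Real.mul_rpow (abs_nonneg _) (Real.rpow_nonneg hωx.le _), hω1]
    have hb : (t⁻¹ * ω x ^ (-(1/p))) ^ q = t ^ (-q) * σ x := by
      rw [Real.mul_rpow (by positivity) (Real.rpow_nonneg hωx.le _),
        Real.inv_rpow ht.le, ← Real.rpow_neg ht.le, hω2]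
    calc |f x| = _ := hprod.symm
      _ ≤ _ := key
      _ = (t^p/p) * F x + (t^(-q)/q) * σ x := by rw [ha, hb]; ring
  have hcond : ∀ t : ℚ, 0 < t → ∀ᵐ x ∂μ,
      (μ[af|m]) x ≤
        ((t:ℝ)^p/p) * (μ[F|m]) x + ((t:ℝ)^(-q)/q) * (μ[σ|m]) x := by
    intro t ht
    have htR : (0:ℝ) < (t:ℝ) := by exact_mod_cast ht
    have hint : Integrable ((((t:ℝ)^p/p) • F) + (((t:ℝ)^(-q)/q) • σ)) μ :=
      (hF.smul (((t:ℝ)^p/p))).add (hσ.smul (((t:ℝ)^(-q)/q)))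
    have h1 : μ[af|m] ≤ᵐ[μ] μ[(((t:ℝ)^p/p) • F) + (((t:ℝ)^(-q)/q) • σ)|m] :=
      condExp_mono hf.abs hint (ae_of_all _ fun x => by
        simpa [Pi.add_apply, Pi.smul_apply, smul_eq_mul] using hYoung t htR x)
    have h2 : μ[(((t:ℝ)^p/p) • F) + (((t:ℝ)^(-q)/q) • σ)|m] =ᵐ[μ]
        (((t:ℝ)^p/p) • μ[F|m]) + (((t:ℝ)^(-q)/q) • μ[σ|m]) := by
      refine (condExp_add (hF.smul _) (hσ.smul _) m).trans ?_
      exact (condExp_smul _ _ m).add (condExp_smul _ _ m)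
    filter_upwards [h1, h2] with x hx1 hx2
    rw [hx2] at hx1
    simpa [Pi.add_apply, Pi.smul_apply, smul_eq_mul] using hx1
  have habs : ∀ᵐ x ∂μ, |(μ[f|m]) x| ≤ (μ[af|m]) x := by
    have h1 : μ[f|m] ≤ᵐ[μ] μ[af|m] :=
      condExp_mono hf hf.abs (ae_of_all _ fun x => le_abs_self _)
    have h2 : μ[-f|m] ≤ᵐ[μ] μ[af|m] :=
      condExp_mono hf.neg hf.abs (ae_of_all _ fun x => neg_le_abs _)
    have h3 := condExp_neg (μ := μ) (m := m) f
    filter_upwards [h1, h2, h3] with x hx1 hx2 hx3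
    rw [abs_le]
    refine ⟨?_, hx1⟩
    rw [hx3, Pi.neg_apply] at hx2
    linarith
  have hGnn : 0 ≤ᵐ[μ] μ[F|m] :=
    condExp_nonneg (ae_of_all _ fun x =>
      mul_nonneg (Real.rpow_nonneg (abs_nonneg _) _) (hω x).le)
  have hSnn : 0 ≤ᵐ[μ] μ[σ|m] :=
    condExp_nonneg (ae_of_all _ fun x => Real.rpow_nonneg (hω x).le _)
  have hall : ∀ᵐ x ∂μ, ∀ t : ℚ, 0 < t →
      (μ[af|m]) x ≤
        ((t:ℝ)^p/p) * (μ[F|m]) x + ((t:ℝ)^(-q)/q) * (μ[σ|m]) x := by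
    rw [ae_all_iff]
    intro t
    by_cases ht : 0 < t
    · exact (hcond t ht).mono fun x hx _ => hx
    · exact ae_of_all _ fun x h => absurd h ht
  filter_upwards [hall, habs, hGnn, hSnn] with x hx hax hG hS
  rw [hexp]
  apply young_opt_rat hp hq1 hpq hG hS
  intro t ht
  have := hx t ht
  calc |(μ[f|m]) x| ≤ _ := hax
    _ ≤ (t:ℝ)^p/p * (μ[F|m]) x + (t:ℝ)^(-q)/q * (μ[σ|m]) x := this
    _ = (t:ℝ)^p * (μ[F|m]) x / p + (t:ℝ)^(-q) * (μ[σ|m]) x / q := by ring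

theorem stmt_3
    {Ω : Type*} {m0 : MeasurableSpace Ω} {μ : Measure Ω} [IsProbabilityMeasure μ]
    (ℱ : Filtration ℕ m0)
    (v ω₁ ω₂ : Ω → ℝ)
    (hv : ∀ x, 0 < v x) (hω₁ : ∀ x, 0 < ω₁ x) (hω₂ : ∀ x, 0 < ω₂ x)
    (hvI : Integrable v μ) (hω₁I : Integrable ω₁ μ) (hω₂I : Integrable ω₂ μ)
    (p p₁ p₂ C : ℝ) (hp₁ : 1 < p₁) (hp₂ : 1 < p₂)
    (hp : 1 / p = 1 / p₁ + 1 / p₂) (hC : 0 < C)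
    (hσ₁I : Integrable (fun x => ω₁ x ^ (-(1 / (p₁ - 1)))) μ)
    (hσ₂I : Integrable (fun x => ω₂ x ^ (-(1 / (p₂ - 1)))) μ)
    (hA : ∀ n : ℕ, ∀ᵐ x ∂μ,
      (μ[v|ℱ n]) x ^ (1 / p)
        * (μ[fun y => ω₁ y ^ (-(1 / (p₁ - 1)))|ℱ n]) x ^ ((p₁ - 1) / p₁)
        * (μ[fun y => ω₂ y ^ (-(1 / (p₂ - 1)))|ℱ n]) x ^ ((p₂ - 1) / p₂) ≤ C) :
    ∃ C' : ℝ, 0 < C' ∧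
      ∀ f g : Ω → ℝ, Integrable f μ →
        Integrable (fun x => |f x| ^ p₁ * ω₁ x) μ →
        Integrable g μ →
        Integrable (fun x => |g x| ^ p₂ * ω₂ x) μ →
        ∀ lam : ℝ, 0 < lam →
          lam * (∫ x in {x | ENNReal.ofReal lam <
              ⨆ n, ENNReal.ofReal (|(μ[f|ℱ n]) x| * |(μ[g|ℱ n]) x|)}, v x ∂μ) ^ (1 / p)
            ≤ C' * (∫ x, |f x| ^ p₁ * ω₁ x ∂μ) ^ (1 / p₁)
                * (∫ x, |g x| ^ p₂ * ω₂ x ∂μ) ^ (1 / p₂) := by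
  classical
  have hp₁0 : (0:ℝ) < p₁ := by linarith
  have hp₂0 : (0:ℝ) < p₂ := by linarith
  have hpinv : (0:ℝ) < 1/p := by rw [hp]; positivity
  have hp0 : (0:ℝ) < p := one_div_pos.mp hpinv
  have hpp₁ : p < p₁ := by
    have h2 : (0:ℝ) < 1/p₂ := by positivity
    have h1 : 1/p₁ < 1/p := by rw [hp]; linarith
    have := (div_lt_div_iff₀ hp₁0 hp0).mp h1
    linarith
  have hsum : p/p₁ + p/p₂ = 1 := by
    field_simp
    field_simp at hp
    linarith
  have hconj' : (p₁/p).HolderConjugate (p₂/p) := by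
    constructor
    · rw [inv_div, inv_div, inv_one]; exact hsum
    · exact lt_trans one_pos ((one_lt_div hp0).2 hpp₁)
    · positivity
  have hdiv₁ : (0:ℝ) ≤ p/p₁ := by positivity
  have hdiv₂ : (0:ℝ) ≤ p/p₂ := by positivity
  refine ⟨C, hC, ?_⟩
  intro f g hfI hF₁I hgI hF₂I lam hlam
  set F₁ : Ω → ℝ := fun x => |f x| ^ p₁ * ω₁ x with hF₁def
  set F₂ : Ω → ℝ := fun x => |g x| ^ p₂ * ω₂ x with hF₂def
  have hF₁nn : ∀ x, 0 ≤ F₁ x := fun x =>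
    mul_nonneg (Real.rpow_nonneg (abs_nonneg _) _) (hω₁ x).le
  have hF₂nn : ∀ x, 0 ≤ F₂ x := fun x =>
    mul_nonneg (Real.rpow_nonneg (abs_nonneg _) _) (hω₂ x).le
  set M : ℕ → Ω → ℝ := fun n x => |(μ[f|ℱ n]) x| * |(μ[g|ℱ n]) x| with hMdef
  set A : ℕ → Set Ω := fun n =>
    {x | lam < M n x} ∩ ⋂ (k : ℕ) (_ : k < n), {x | M k x ≤ lam} with hAdef
  have hmemA : ∀ n x, x ∈ A n ↔ lam < M n x ∧ ∀ k < n, M k x ≤ lam := by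
    intro n x
    simp [hAdef, Set.mem_iInter]
  have hMmeas : ∀ n, Measurable[ℱ n] (M n) := by
    intro n
    have h1 : StronglyMeasurable[ℱ n] (μ[f|ℱ n]) := stronglyMeasurable_condExp
    have h2 : StronglyMeasurable[ℱ n] (μ[g|ℱ n]) := stronglyMeasurable_condExp
    letI : MeasurableSpace Ω := ℱ n
    exact (h1.measurable.abs).mul (h2.measurable.abs)
  have hAmeas : ∀ n, MeasurableSet[ℱ n] (A n) := by
    intro n
    apply MeasurableSet.inter
    · exact measurableSet_lt measurable_const (hMmeas n)
    · refine MeasurableSet.iInter fun k => MeasurableSet.iInter fun hk => ?_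
      exact ℱ.mono hk.le _ (measurableSet_le (hMmeas k) measurable_const)
  have hAm0 : ∀ n, MeasurableSet (A n) := fun n => ℱ.le n _ (hAmeas n)
  have hdisj : Pairwise (Function.onFun Disjoint A) := by
    intro i j hij
    rcases lt_or_gt_of_ne hij with h | h
    · rw [Function.onFun, Set.disjoint_left]
      intro x hxi hxj
      exact absurd ((hmemA i x).1 hxi).1 (not_lt.2 (((hmemA j x).1 hxj).2 i h))
    · rw [Function.onFun, Set.disjoint_left]
      intro x hxi hxj
      exact absurd ((hmemA j x).1 hxj).1 (not_lt.2 (((hmemA i x).1 hxi).2 j h))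
  have hSA : {x | ENNReal.ofReal lam <
      ⨆ n, ENNReal.ofReal (|(μ[f|ℱ n]) x| * |(μ[g|ℱ n]) x|)} = ⋃ n, A n := by
    ext x
    simp only [Set.mem_setOf_eq, Set.mem_iUnion, lt_iSup_iff]
    constructor
    · rintro ⟨n, hn⟩
      have hn' : lam < M n x := (ENNReal.ofReal_lt_ofReal_iff_of_nonneg hlam.le).1 hn
      have hex : ∃ m, lam < M m x := ⟨n, hn'⟩
      refine ⟨Nat.find hex, (hmemA _ x).2 ⟨Nat.find_spec hex, fun k hk => ?_⟩⟩
      exact not_lt.1 (Nat.find_min hex hk)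
    · rintro ⟨n, hn⟩
      exact ⟨n, (ENNReal.ofReal_lt_ofReal_iff_of_nonneg hlam.le).2 ((hmemA n x).1 hn).1⟩
  -- pointwise key bound
  have hkey : ∀ n : ℕ, ∀ᵐ x ∂μ,
      M n x * (μ[v|ℱ n]) x ^ (1/p) ≤
        C * ((μ[F₁|ℱ n]) x) ^ (1/p₁) * ((μ[F₂|ℱ n]) x) ^ (1/p₂) := by
    intro n
    have hH₁ := condexp_holder (m := ℱ n) f ω₁ hω₁ p₁ hp₁ hfI hF₁I hσ₁I
    have hH₂ := condexp_holder (m := ℱ n) g ω₂ hω₂ p₂ hp₂ hgI hF₂I hσ₂I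
    have hVnn : 0 ≤ᵐ[μ] μ[v|ℱ n] := condExp_nonneg (ae_of_all _ fun x => (hv x).le)
    have hG₁nn : 0 ≤ᵐ[μ] μ[F₁|ℱ n] := condExp_nonneg (ae_of_all _ hF₁nn)
    have hG₂nn : 0 ≤ᵐ[μ] μ[F₂|ℱ n] := condExp_nonneg (ae_of_all _ hF₂nn)
    have hS₁nn : 0 ≤ᵐ[μ] μ[fun y => ω₁ y ^ (-(1 / (p₁ - 1)))|ℱ n] :=
      condExp_nonneg (ae_of_all _ fun x => Real.rpow_nonneg (hω₁ x).le _)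
    have hS₂nn : 0 ≤ᵐ[μ] μ[fun y => ω₂ y ^ (-(1 / (p₂ - 1)))|ℱ n] :=
      condExp_nonneg (ae_of_all _ fun x => Real.rpow_nonneg (hω₂ x).le _)
    filter_upwards [hH₁, hH₂, hA n, hVnn, hG₁nn, hG₂nn, hS₁nn, hS₂nn] with x h1 h2 h3 hV hG1 hG2 hS1 hS2
    have hVp : (0:ℝ) ≤ (μ[v|ℱ n]) x ^ (1/p) := Real.rpow_nonneg hV _
    have hG₁p : (0:ℝ) ≤ ((μ[F₁|ℱ n]) x) ^ (1/p₁) := Real.rpow_nonneg hG1 _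
    have hG₂p : (0:ℝ) ≤ ((μ[F₂|ℱ n]) x) ^ (1/p₂) := Real.rpow_nonneg hG2 _
    have hS₁p : (0:ℝ) ≤ ((μ[fun y => ω₁ y ^ (-(1 / (p₁ - 1)))|ℱ n]) x) ^ ((p₁-1)/p₁) :=
      Real.rpow_nonneg hS1 _
    have hS₂p : (0:ℝ) ≤ ((μ[fun y => ω₂ y ^ (-(1 / (p₂ - 1)))|ℱ n]) x) ^ ((p₂-1)/p₂) :=
      Real.rpow_nonneg hS2 _
    calc M n x * (μ[v|ℱ n]) x ^ (1/p)
        ≤ (((μ[F₁|ℱ n]) x) ^ (1/p₁) *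
            ((μ[fun y => ω₁ y ^ (-(1 / (p₁ - 1)))|ℱ n]) x) ^ ((p₁-1)/p₁)) *
          (((μ[F₂|ℱ n]) x) ^ (1/p₂) *
            ((μ[fun y => ω₂ y ^ (-(1 / (p₂ - 1)))|ℱ n]) x) ^ ((p₂-1)/p₂)) *
          (μ[v|ℱ n]) x ^ (1/p) := by
          refine mul_le_mul_of_nonneg_right ?_ hVp
          exact mul_le_mul h1 h2 (abs_nonneg _) (mul_nonneg hG₁p hS₁p)
      _ = ((μ[v|ℱ n]) x ^ (1/p) *
            ((μ[fun y => ω₁ y ^ (-(1 / (p₁ - 1)))|ℱ n]) x) ^ ((p₁-1)/p₁) *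
            ((μ[fun y => ω₂ y ^ (-(1 / (p₂ - 1)))|ℱ n]) x) ^ ((p₂-1)/p₂)) *
          (((μ[F₁|ℱ n]) x) ^ (1/p₁) * ((μ[F₂|ℱ n]) x) ^ (1/p₂)) := by ring
      _ ≤ C * (((μ[F₁|ℱ n]) x) ^ (1/p₁) * ((μ[F₂|ℱ n]) x) ^ (1/p₂)) :=
          mul_le_mul_of_nonneg_right h3 (mul_nonneg hG₁p hG₂p)
      _ = C * ((μ[F₁|ℱ n]) x) ^ (1/p₁) * ((μ[F₂|ℱ n]) x) ^ (1/p₂) := by ring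
  -- per-n ENNReal estimate
  have hkeyn : ∀ n : ℕ,
      ENNReal.ofReal (lam^p) * ENNReal.ofReal (∫ x in A n, v x ∂μ) ≤
      ENNReal.ofReal (C^p) * (ENNReal.ofReal (∫ x in A n, F₁ x ∂μ) ^ (p/p₁)
        * ENNReal.ofReal (∫ x in A n, F₂ x ∂μ) ^ (p/p₂)) := by
    intro n
    have hVnn : 0 ≤ᵐ[μ] μ[v|ℱ n] := condExp_nonneg (ae_of_all _ fun x => (hv x).le)
    have hG₁nn : 0 ≤ᵐ[μ] μ[F₁|ℱ n] := condExp_nonneg (ae_of_all _ hF₁nn)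
    have hG₂nn : 0 ≤ᵐ[μ] μ[F₂|ℱ n] := condExp_nonneg (ae_of_all _ hF₂nn)
    have hres : ∀ᵐ x ∂(μ.restrict (A n)),
        ENNReal.ofReal (lam^p) * ENNReal.ofReal ((μ[v|ℱ n]) x) ≤
        ENNReal.ofReal (C^p) * (ENNReal.ofReal ((μ[F₁|ℱ n]) x) ^ (p/p₁)
          * ENNReal.ofReal ((μ[F₂|ℱ n]) x) ^ (p/p₂)) := by
      filter_upwards [ae_restrict_of_ae (hkey n), ae_restrict_of_ae hVnn,
        ae_restrict_of_ae hG₁nn, ae_restrict_of_ae hG₂nn,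
        ae_restrict_mem (hAm0 n)] with x hx hV hG1 hG2 hmem
      have hlt : lam ≤ M n x := ((hmemA n x).1 hmem).1.le
      have step1 : lam * (μ[v|ℱ n]) x ^ (1/p) ≤
          C * ((μ[F₁|ℱ n]) x) ^ (1/p₁) * ((μ[F₂|ℱ n]) x) ^ (1/p₂) :=
        le_trans (mul_le_mul_of_nonneg_right hlt (Real.rpow_nonneg hV _)) hx
      have step2 : (lam * (μ[v|ℱ n]) x ^ (1/p)) ^ p ≤
          (C * ((μ[F₁|ℱ n]) x) ^ (1/p₁) * ((μ[F₂|ℱ n]) x) ^ (1/p₂)) ^ p :=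
        Real.rpow_le_rpow (mul_nonneg hlam.le (Real.rpow_nonneg hV _)) step1 hp0.le
      have eL : (lam * (μ[v|ℱ n]) x ^ (1/p)) ^ p = lam ^ p * (μ[v|ℱ n]) x := by
        rw [Real.mul_rpow hlam.le (Real.rpow_nonneg hV _), ← Real.rpow_mul hV,
          one_div_mul_cancel hp0.ne', Real.rpow_one]
      have eR : (C * ((μ[F₁|ℱ n]) x) ^ (1/p₁) * ((μ[F₂|ℱ n]) x) ^ (1/p₂)) ^ p
          = C ^ p * ((μ[F₁|ℱ n]) x) ^ (p/p₁) * ((μ[F₂|ℱ n]) x) ^ (p/p₂) := by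
        rw [Real.mul_rpow (mul_nonneg hC.le (Real.rpow_nonneg hG1 _)) (Real.rpow_nonneg hG2 _),
          Real.mul_rpow hC.le (Real.rpow_nonneg hG1 _),
          ← Real.rpow_mul hG1, ← Real.rpow_mul hG2,
          one_div_mul_eq_div, one_div_mul_eq_div]
      rw [eL, eR] at step2
      calc ENNReal.ofReal (lam^p) * ENNReal.ofReal ((μ[v|ℱ n]) x)
          = ENNReal.ofReal (lam^p * (μ[v|ℱ n]) x) :=
            (ENNReal.ofReal_mul (by positivity)).symm
        _ ≤ ENNReal.ofReal (C^p * ((μ[F₁|ℱ n]) x) ^ (p/p₁) * ((μ[F₂|ℱ n]) x) ^ (p/p₂)) :=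
            ENNReal.ofReal_le_ofReal step2
        _ = _ := by
            rw [ENNReal.ofReal_mul (mul_nonneg (by positivity) (Real.rpow_nonneg hG1 _)),
              ENNReal.ofReal_mul (by positivity : (0:ℝ) ≤ C^p),
              ENNReal.ofReal_rpow_of_nonneg hG1 hdiv₁,
              ENNReal.ofReal_rpow_of_nonneg hG2 hdiv₂, mul_assoc]
    have hmeasG₁ : Measurable fun x => ENNReal.ofReal ((μ[F₁|ℱ n]) x) :=
      ((stronglyMeasurable_condExp.mono (ℱ.le n)).measurable).ennreal_ofReal
    have hmeasG₂ : Measurable fun x => ENNReal.ofReal ((μ[F₂|ℱ n]) x) :=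
      ((stronglyMeasurable_condExp.mono (ℱ.le n)).measurable).ennreal_ofReal
    have hLv : ENNReal.ofReal (∫ x in A n, v x ∂μ)
        = ∫⁻ x in A n, ENNReal.ofReal ((μ[v|ℱ n]) x) ∂μ := by
      rw [← setIntegral_condExp (ℱ.le n) hvI (hAmeas n)]
      exact ofReal_integral_eq_lintegral_ofReal integrable_condExp.integrableOn
        (ae_restrict_of_ae hVnn)
    have hLG₁ : ∫⁻ x in A n, ENNReal.ofReal ((μ[F₁|ℱ n]) x) ∂μ
        = ENNReal.ofReal (∫ x in A n, F₁ x ∂μ) := by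
      rw [← setIntegral_condExp (ℱ.le n) hF₁I (hAmeas n)]
      exact (ofReal_integral_eq_lintegral_ofReal integrable_condExp.integrableOn
        (ae_restrict_of_ae hG₁nn)).symm
    have hLG₂ : ∫⁻ x in A n, ENNReal.ofReal ((μ[F₂|ℱ n]) x) ∂μ
        = ENNReal.ofReal (∫ x in A n, F₂ x ∂μ) := by
      rw [← setIntegral_condExp (ℱ.le n) hF₂I (hAmeas n)]
      exact (ofReal_integral_eq_lintegral_ofReal integrable_condExp.integrableOn
        (ae_restrict_of_ae hG₂nn)).symm
    have hrp₁ : p/p₁ * (p₁/p) = 1 := by field_simp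
    have hrp₂ : p/p₂ * (p₂/p) = 1 := by field_simp
    calc ENNReal.ofReal (lam^p) * ENNReal.ofReal (∫ x in A n, v x ∂μ)
        = ∫⁻ x in A n, ENNReal.ofReal (lam^p) * ENNReal.ofReal ((μ[v|ℱ n]) x) ∂μ := by
          rw [hLv, lintegral_const_mul' _ _ ENNReal.ofReal_ne_top]
      _ ≤ ∫⁻ x in A n, ENNReal.ofReal (C^p) * (ENNReal.ofReal ((μ[F₁|ℱ n]) x) ^ (p/p₁)
            * ENNReal.ofReal ((μ[F₂|ℱ n]) x) ^ (p/p₂)) ∂μ := lintegral_mono_ae hres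
      _ = ENNReal.ofReal (C^p) * ∫⁻ x in A n, ENNReal.ofReal ((μ[F₁|ℱ n]) x) ^ (p/p₁)
            * ENNReal.ofReal ((μ[F₂|ℱ n]) x) ^ (p/p₂) ∂μ :=
          lintegral_const_mul' _ _ ENNReal.ofReal_ne_top
      _ ≤ ENNReal.ofReal (C^p) *
            ((∫⁻ x in A n, (ENNReal.ofReal ((μ[F₁|ℱ n]) x) ^ (p/p₁)) ^ (p₁/p) ∂μ) ^ (1/(p₁/p))
            * (∫⁻ x in A n, (ENNReal.ofReal ((μ[F₂|ℱ n]) x) ^ (p/p₂)) ^ (p₂/p) ∂μ) ^ (1/(p₂/p))) := by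
          refine mul_le_mul_right ?_ _
          exact ENNReal.lintegral_mul_le_Lp_mul_Lq _ hconj'
            ((hmeasG₁.pow_const _).aemeasurable) ((hmeasG₂.pow_const _).aemeasurable)
      _ = ENNReal.ofReal (C^p) * (ENNReal.ofReal (∫ x in A n, F₁ x ∂μ) ^ (p/p₁)
            * ENNReal.ofReal (∫ x in A n, F₂ x ∂μ) ^ (p/p₂)) := by
          simp_rw [← ENNReal.rpow_mul, hrp₁, hrp₂, ENNReal.rpow_one, one_div_div]
          rw [hLG₁, hLG₂]
  -- sum over n
  rw [hSA]
  have hsum_v : HasSum (fun n => ∫ x in A n, v x ∂μ) (∫ x in ⋃ n, A n, v x ∂μ) :=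
    hasSum_integral_iUnion hAm0 hdisj hvI.integrableOn
  have hsum_1 : HasSum (fun n => ∫ x in A n, F₁ x ∂μ) (∫ x in ⋃ n, A n, F₁ x ∂μ) :=
    hasSum_integral_iUnion hAm0 hdisj hF₁I.integrableOn
  have hsum_2 : HasSum (fun n => ∫ x in A n, F₂ x ∂μ) (∫ x in ⋃ n, A n, F₂ x ∂μ) :=
    hasSum_integral_iUnion hAm0 hdisj hF₂I.integrableOn
  have hnn_v : ∀ n, 0 ≤ ∫ x in A n, v x ∂μ := fun n => integral_nonneg fun x => (hv x).le
  have hnn_1 : ∀ n, 0 ≤ ∫ x in A n, F₁ x ∂μ := fun n => integral_nonneg hF₁nn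
  have hnn_2 : ∀ n, 0 ≤ ∫ x in A n, F₂ x ∂μ := fun n => integral_nonneg hF₂nn
  have hEv : ENNReal.ofReal (∫ x in ⋃ n, A n, v x ∂μ)
      = ∑' n, ENNReal.ofReal (∫ x in A n, v x ∂μ) := by
    rw [← hsum_v.tsum_eq]
    exact ENNReal.ofReal_tsum_of_nonneg hnn_v hsum_v.summable
  have hE1 : ENNReal.ofReal (∫ x in ⋃ n, A n, F₁ x ∂μ)
      = ∑' n, ENNReal.ofReal (∫ x in A n, F₁ x ∂μ) := by
    rw [← hsum_1.tsum_eq]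
    exact ENNReal.ofReal_tsum_of_nonneg hnn_1 hsum_1.summable
  have hE2 : ENNReal.ofReal (∫ x in ⋃ n, A n, F₂ x ∂μ)
      = ∑' n, ENNReal.ofReal (∫ x in A n, F₂ x ∂μ) := by
    rw [← hsum_2.tsum_eq]
    exact ENNReal.ofReal_tsum_of_nonneg hnn_2 hsum_2.summable
  have hrp₁ : p/p₁ * (p₁/p) = 1 := by field_simp
  have hrp₂ : p/p₂ * (p₂/p) = 1 := by field_simp
  have htsum_holder :
      ∑' n, (ENNReal.ofReal (∫ x in A n, F₁ x ∂μ)) ^ (p/p₁)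
        * (ENNReal.ofReal (∫ x in A n, F₂ x ∂μ)) ^ (p/p₂)
      ≤ (∑' n, ENNReal.ofReal (∫ x in A n, F₁ x ∂μ)) ^ (p/p₁)
        * (∑' n, ENNReal.ofReal (∫ x in A n, F₂ x ∂μ)) ^ (p/p₂) := by
    have h := ENNReal.lintegral_mul_le_Lp_mul_Lq (Measure.count : Measure ℕ) hconj'
      (f := fun n => (ENNReal.ofReal (∫ x in A n, F₁ x ∂μ)) ^ (p/p₁))
      (g := fun n => (ENNReal.ofReal (∫ x in A n, F₂ x ∂μ)) ^ (p/p₂))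
      measurable_from_nat.aemeasurable measurable_from_nat.aemeasurable
    simp only [Pi.mul_apply] at h
    rw [lintegral_count, lintegral_count, lintegral_count] at h
    simp_rw [← ENNReal.rpow_mul, hrp₁, hrp₂, ENNReal.rpow_one, one_div_div] at h
    exact h
  have hI₁nn : 0 ≤ ∫ x, F₁ x ∂μ := integral_nonneg hF₁nn
  have hI₂nn : 0 ≤ ∫ x, F₂ x ∂μ := integral_nonneg hF₂nn
  have hJnn : 0 ≤ ∫ x in ⋃ n, A n, v x ∂μ := integral_nonneg fun x => (hv x).le
  have final : ENNReal.ofReal (lam^p) * ENNReal.ofReal (∫ x in ⋃ n, A n, v x ∂μ)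
      ≤ ENNReal.ofReal (C^p) * (ENNReal.ofReal (∫ x, F₁ x ∂μ) ^ (p/p₁)
        * ENNReal.ofReal (∫ x, F₂ x ∂μ) ^ (p/p₂)) := by
    calc ENNReal.ofReal (lam^p) * ENNReal.ofReal (∫ x in ⋃ n, A n, v x ∂μ)
        = ∑' n, ENNReal.ofReal (lam^p) * ENNReal.ofReal (∫ x in A n, v x ∂μ) := by
          rw [hEv, ENNReal.tsum_mul_left]
      _ ≤ ∑' n, ENNReal.ofReal (C^p) * (ENNReal.ofReal (∫ x in A n, F₁ x ∂μ) ^ (p/p₁)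
            * ENNReal.ofReal (∫ x in A n, F₂ x ∂μ) ^ (p/p₂)) :=
          ENNReal.tsum_le_tsum fun n => hkeyn n
      _ = ENNReal.ofReal (C^p) * ∑' n, (ENNReal.ofReal (∫ x in A n, F₁ x ∂μ) ^ (p/p₁)
            * ENNReal.ofReal (∫ x in A n, F₂ x ∂μ) ^ (p/p₂)) := ENNReal.tsum_mul_left
      _ ≤ ENNReal.ofReal (C^p) *
            ((∑' n, ENNReal.ofReal (∫ x in A n, F₁ x ∂μ)) ^ (p/p₁)
            * (∑' n, ENNReal.ofReal (∫ x in A n, F₂ x ∂μ)) ^ (p/p₂)) :=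
          mul_le_mul_right htsum_holder _
      _ = ENNReal.ofReal (C^p) *
            (ENNReal.ofReal (∫ x in ⋃ n, A n, F₁ x ∂μ) ^ (p/p₁)
            * ENNReal.ofReal (∫ x in ⋃ n, A n, F₂ x ∂μ) ^ (p/p₂)) := by
          rw [← hE1, ← hE2]
      _ ≤ ENNReal.ofReal (C^p) * (ENNReal.ofReal (∫ x, F₁ x ∂μ) ^ (p/p₁)
            * ENNReal.ofReal (∫ x, F₂ x ∂μ) ^ (p/p₂)) := by
          refine mul_le_mul_right (mul_le_mul' ?_ ?_) _
          · exact ENNReal.rpow_le_rpow (ENNReal.ofReal_le_ofReal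
              (setIntegral_le_integral hF₁I (ae_of_all _ hF₁nn))) hdiv₁
          · exact ENNReal.rpow_le_rpow (ENNReal.ofReal_le_ofReal
              (setIntegral_le_integral hF₂I (ae_of_all _ hF₂nn))) hdiv₂
  have hreal : lam^p * ∫ x in ⋃ n, A n, v x ∂μ
      ≤ C^p * (∫ x, F₁ x ∂μ)^(p/p₁) * (∫ x, F₂ x ∂μ)^(p/p₂) := by
    rw [← ENNReal.ofReal_le_ofReal_iff (by positivity)]
    calc ENNReal.ofReal (lam^p * ∫ x in ⋃ n, A n, v x ∂μ)
        = ENNReal.ofReal (lam^p) * ENNReal.ofReal (∫ x in ⋃ n, A n, v x ∂μ) :=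
          ENNReal.ofReal_mul (by positivity)
      _ ≤ ENNReal.ofReal (C^p) * (ENNReal.ofReal (∫ x, F₁ x ∂μ) ^ (p/p₁)
            * ENNReal.ofReal (∫ x, F₂ x ∂μ) ^ (p/p₂)) := final
      _ = ENNReal.ofReal (C^p * (∫ x, F₁ x ∂μ)^(p/p₁) * (∫ x, F₂ x ∂μ)^(p/p₂)) := by
          rw [ENNReal.ofReal_mul (mul_nonneg (by positivity) (Real.rpow_nonneg hI₁nn _)),
            ENNReal.ofReal_mul (by positivity : (0:ℝ) ≤ C^p),
            ENNReal.ofReal_rpow_of_nonneg hI₁nn hdiv₁,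
            ENNReal.ofReal_rpow_of_nonneg hI₂nn hdiv₂, mul_assoc]
  have he₁ : p/p₁ * (1/p) = 1/p₁ := by field_simp
  have he₂ : p/p₂ * (1/p) = 1/p₂ := by field_simp
  calc lam * (∫ x in ⋃ n, A n, v x ∂μ) ^ (1/p)
      = (lam^p * ∫ x in ⋃ n, A n, v x ∂μ) ^ (1/p) := by
        rw [Real.mul_rpow (by positivity) hJnn, ← Real.rpow_mul hlam.le,
          mul_one_div_cancel hp0.ne', Real.rpow_one]
    _ ≤ (C^p * (∫ x, F₁ x ∂μ)^(p/p₁) * (∫ x, F₂ x ∂μ)^(p/p₂)) ^ (1/p) :=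
        Real.rpow_le_rpow (mul_nonneg (by positivity) hJnn) hreal (by positivity)
    _ = C * (∫ x, F₁ x ∂μ) ^ (1/p₁) * (∫ x, F₂ x ∂μ) ^ (1/p₂) := by
        rw [Real.mul_rpow (mul_nonneg (by positivity) (Real.rpow_nonneg hI₁nn _))
            (Real.rpow_nonneg hI₂nn _),
          Real.mul_rpow (by positivity) (Real.rpow_nonneg hI₁nn _),
          ← Real.rpow_mul hI₁nn, ← Real.rpow_mul hI₂nn,
          ← Real.rpow_mul hC.le, mul_one_div_cancel hp0.ne', Real.rpow_one,
          he₁, he₂]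

end
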